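/- Let G be a finite graph of order n with a (not necessarily proper) edge colouring. Then G contains a rainbow spanning tree if and only if for every set of r colours with 0 ≤ r ≤ n − 2, the graph obtained from G by removing all edges coloured with one of these r colours has at most r + 1 connected components. -/

import Mathlib

set_option linter.unusedSectionVars false
set_option maxHeartbeats 1000000

open Function Set

section Cards
variable {α β : Type*} [Finite α] [Finite β]

lemma surj_add_one {ψ : α → β} (h : Surjective ψ) {a b : α} (hab : a ≠ b)
    (he : ψ a = ψ b) : Nat.card β + 1 ≤ Nat.card α := by
  classical
  set g := surjInv h with hg
  have hginj : Injective g := injective_surjInv h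
  have hrange : ∀ x, x ∈ Set.range g → x = g (ψ x) := by
    rintro x ⟨y, rfl⟩
    rw [hg, surjInv_eq h y]
  have hw : a ∉ Set.range g ∨ b ∉ Set.range g := by
    by_contra hcon
    push_neg at hcon
    exact hab (by rw [hrange a hcon.1, hrange b hcon.2, he])
  have hcard : Nat.card β = (Set.range g).ncard := by
    rw [← Nat.card_range_of_injective hginj, Nat.card_coe_set_eq]
  obtain hw | hw := hw
  · calc Nat.card β + 1 = (insert a (Set.range g)).ncard := by
          rw [Set.ncard_insert_of_notMem hw, hcard]
      _ ≤ (Set.univ : Set α).ncard := Set.ncard_le_ncard (subset_univ _) (Set.toFinite _)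
      _ = Nat.card α := Set.ncard_univ α
  · calc Nat.card β + 1 = (insert b (Set.range g)).ncard := by
          rw [Set.ncard_insert_of_notMem hw, hcard]
      _ ≤ (Set.univ : Set α).ncard := Set.ncard_le_ncard (subset_univ _) (Set.toFinite _)
      _ = Nat.card α := Set.ncard_univ α

lemma surj_add_two {ψ : α → β} (h : Surjective ψ) {a b a' b' : α} (hab : a ≠ b)
    (hab' : a' ≠ b') (hne : ¬((a' = a ∧ b' = b) ∨ (a' = b ∧ b' = a)))
    (h1 : ψ a = ψ b) (h2 : ψ a' = ψ b') : Nat.card β + 2 ≤ Nat.card α := by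
  classical
  set g := surjInv h with hg
  have hginj : Injective g := injective_surjInv h
  have hψg : ∀ y, ψ (g y) = y := fun y => surjInv_eq h y
  have hrange : ∀ x, x ∈ Set.range g → x = g (ψ x) := by
    rintro x ⟨y, rfl⟩; rw [hψg]
  -- find two distinct elements outside range g
  have hpick : ∃ x₁ x₂ : α, x₁ ≠ x₂ ∧ x₁ ∉ Set.range g ∧ x₂ ∉ Set.range g := by
    have pick1 : ∀ x y : α, x ≠ y → ψ x = ψ y → ∃ z, (z = x ∨ z = y) ∧ z ∉ Set.range g := by
      intro x y hxy hψxy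
      by_cases hx : x ∈ Set.range g
      · refine ⟨y, Or.inr rfl, fun hy => hxy ?_⟩
        rw [hrange x hx, hrange y hy, hψxy]
      · exact ⟨x, Or.inl rfl, hx⟩
    by_cases hff : ψ a = ψ a'
    · -- same fiber; get z ∈ {a',b'} not in {a,b}
      have hz : ∃ z, (z = a' ∨ z = b') ∧ z ∉ ({a, b} : Set α) := by
        by_contra hcon
        push_neg at hcon
        have ha' := hcon a' (Or.inl rfl)
        have hb' := hcon b' (Or.inr rfl)
        simp only [Set.mem_insert_iff, Set.mem_singleton_iff] at ha' hb'
        rcases ha' with h₁ | h₁ <;> rcases hb' with h₂ | h₂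
        · exact hab' (h₁.trans h₂.symm)
        · exact hne (Or.inl ⟨h₁, h₂⟩)
        · exact hne (Or.inr ⟨h₁, h₂⟩)
        · exact hab' (h₁.trans h₂.symm)
      obtain ⟨z, hz1, hz2⟩ := hz
      simp only [Set.mem_insert_iff, Set.mem_singleton_iff, not_or] at hz2
      -- a, b, z distinct, all in same fiber; at most one is in range g
      have hψz : ψ z = ψ a := by
        rcases hz1 with rfl | rfl
        · exact hff.symm
        · rw [← h2, hff]
      have hone : ∀ x y : α, x ∈ Set.range g → y ∈ Set.range g → ψ x = ψ y → x = y := by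
        intro x y hx hy hxy; rw [hrange x hx, hrange y hy, hxy]
      by_cases hza : z ∈ Set.range g
      · -- then a, b ∉ range g… at most: a and b: if a ∈ range then a = z, contra
        refine ⟨a, b, hab, fun ha => hz2.1 (hone z a hza ha hψz),
          fun hb => hz2.2 (hone z b hza hb (hψz.trans h1))⟩
      · by_cases hza2 : a ∈ Set.range g
        · exact ⟨b, z, fun h => hz2.2 h.symm, fun hb => hab (hone a b hza2 hb h1), hza⟩
        · exact ⟨a, z, fun h => hz2.1 h.symm, hza2, hza⟩
    · obtain ⟨x₁, hx₁, hx₁r⟩ := pick1 a b hab h1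
      obtain ⟨x₂, hx₂, hx₂r⟩ := pick1 a' b' hab' h2
      refine ⟨x₁, x₂, fun hx => hff ?_, hx₁r, hx₂r⟩
      have e₁ : ψ x₁ = ψ a := by
        rcases hx₁ with h | h
        · rw [h]
        · rw [h, ← h1]
      have e₂ : ψ x₂ = ψ a' := by
        rcases hx₂ with h | h
        · rw [h]
        · rw [h, ← h2]
      rw [← e₁, ← e₂, hx]
  obtain ⟨x₁, x₂, hx12, hx₁, hx₂⟩ := hpick
  have hcard : Nat.card β = (Set.range g).ncard := by
    rw [← Nat.card_range_of_injective hginj, Nat.card_coe_set_eq]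
  calc Nat.card β + 2 = (insert x₁ (insert x₂ (Set.range g))).ncard := by
        rw [Set.ncard_insert_of_notMem (by
          simp only [Set.mem_insert_iff, not_or]; exact ⟨hx12, hx₁⟩),
          Set.ncard_insert_of_notMem hx₂, hcard]
    _ ≤ (Set.univ : Set α).ncard := Set.ncard_le_ncard (subset_univ _) (Set.toFinite _)
    _ = Nat.card α := Set.ncard_univ α

lemma card_le_add_one {ψ : α → β} {p q : α}
    (h : ∀ x y, ψ x = ψ y → x = y ∨ (x = p ∧ y = q) ∨ (x = q ∧ y = p)) :
    Nat.card α ≤ Nat.card β + 1 := by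
  classical
  have hinj : Set.InjOn ψ (Set.univ \ {q}) := by
    rintro x ⟨-, hx⟩ y ⟨-, hy⟩ hxy
    rcases h x y hxy with h' | ⟨rfl, rfl⟩ | ⟨rfl, h''⟩
    · exact h'
    · exact absurd rfl hy
    · exact absurd rfl hx
  have h1 : (Set.univ \ {q} : Set α).ncard + 1 = Nat.card α := by
    rw [Set.ncard_diff_singleton_add_one (Set.mem_univ q), Set.ncard_univ]
  have h2 : (Set.univ \ {q} : Set α).ncard ≤ Nat.card β := by
    calc (Set.univ \ {q} : Set α).ncard = (ψ '' (Set.univ \ {q})).ncard :=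
          (Set.ncard_image_of_injOn hinj).symm
      _ ≤ (Set.univ : Set β).ncard := Set.ncard_le_ncard (subset_univ _) (Set.toFinite _)
      _ = Nat.card β := Set.ncard_univ β
  omega

end Cards

open Function Set SimpleGraph

section Graph

variable {V : Type*} [Fintype V]

private instance ccFinite (H : SimpleGraph V) : Finite H.ConnectedComponent :=
  Quot.finite _

/-- number of connected components -/
noncomputable def ncomp (H : SimpleGraph V) : ℕ := Nat.card H.ConnectedComponent

/-- induced map on components -/
def cmap {H H' : SimpleGraph V} (h : H ≤ H') :
    H.ConnectedComponent → H'.ConnectedComponent :=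
  ConnectedComponent.map (Hom.ofLE h)

lemma cmap_mk {H H' : SimpleGraph V} (h : H ≤ H') (v : V) :
    cmap h (H.connectedComponentMk v) = H'.connectedComponentMk v := rfl

lemma cmap_surjective {H H' : SimpleGraph V} (h : H ≤ H') :
    Surjective (cmap h) := by
  intro x
  refine x.ind (fun v => ⟨H.connectedComponentMk v, rfl⟩)

lemma ncomp_le_of_le {H H' : SimpleGraph V} (h : H ≤ H') : ncomp H' ≤ ncomp H :=
  Nat.card_le_card_of_surjective (cmap h) (cmap_surjective h)

lemma ncomp_le_card (H : SimpleGraph V) : ncomp H ≤ Fintype.card V := by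
  have : Nat.card V = Fintype.card V := Nat.card_eq_fintype_card
  rw [← this]
  exact Nat.card_le_card_of_surjective H.connectedComponentMk (fun x => x.exists_rep)

lemma ncomp_pos [Nonempty V] (H : SimpleGraph V) : 1 ≤ ncomp H := by
  have : Nonempty H.ConnectedComponent := ⟨H.connectedComponentMk Classical.ofNonempty⟩
  exact Nat.one_le_iff_ne_zero.mpr (Nat.card_ne_zero.mpr ⟨this, ccFinite H⟩)

lemma connected_of_ncomp_le_one [Nonempty V] {H : SimpleGraph V} (h : ncomp H ≤ 1) :
    H.Connected := by
  have h1 : ncomp H = 1 := le_antisymm h (ncomp_pos H)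
  have hsub : Subsingleton H.ConnectedComponent :=
    (Nat.card_eq_one_iff_unique.mp h1).1
  constructor
  intro u v
  exact ConnectedComponent.exact (Subsingleton.elim _ _)

lemma ncomp_eq_one_of_connected {H : SimpleGraph V} (h : H.Connected) : ncomp H = 1 := by
  rw [ncomp, Nat.card_eq_one_iff_unique]
  constructor
  · constructor
    intro x y
    refine ConnectedComponent.ind₂ (fun u v => ?_) x y
    exact ConnectedComponent.sound (h.preconnected u v)
  · have : Nonempty V := h.nonempty
    exact ⟨H.connectedComponentMk Classical.ofNonempty⟩

/-- transfer of reachability when the deleted edge's endpoints stay connected -/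
lemma reach_of_reach_delete {H : SimpleGraph V} {u v : V}
    (hr : (H.deleteEdges {s(u, v)}).Reachable u v) :
    ∀ {a b : V}, H.Reachable a b → (H.deleteEdges {s(u, v)}).Reachable a b := by
  intro a b hab
  obtain ⟨w⟩ := hab
  induction w with
  | nil => exact Reachable.refl _
  | @cons x y z hxy p ih =>
    by_cases he : s(x, y) = s(u, v)
    · rcases Sym2.eq_iff.mp he with ⟨rfl, rfl⟩ | ⟨rfl, rfl⟩
      · exact hr.trans ih
      · exact hr.symm.trans ih
    · have : (H.deleteEdges {s(u, v)}).Adj x y := by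
        rw [deleteEdges_adj]
        exact ⟨hxy, by simpa using he⟩
      exact this.reachable.trans ih

lemma reach_cases {H : SimpleGraph V} {u v : V} {a b : V} (hr : H.Reachable a b) :
    (H.deleteEdges {s(u, v)}).Reachable a b ∨
    ((H.deleteEdges {s(u, v)}).Reachable a u ∧ (H.deleteEdges {s(u, v)}).Reachable b v) ∨
    ((H.deleteEdges {s(u, v)}).Reachable a v ∧ (H.deleteEdges {s(u, v)}).Reachable b u) := by
  obtain ⟨w⟩ := hr
  induction w with
  | nil => exact Or.inl (Reachable.refl _)
  | @cons x y z hxy p ih =>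
    by_cases he : s(x, y) = s(u, v)
    · have hfull : H.Reachable x z := ⟨Walk.cons hxy p⟩
      rcases Sym2.eq_iff.mp he with ⟨rfl, rfl⟩ | ⟨rfl, rfl⟩
      · -- x = u, y = v
        rcases ih with h1 | ⟨h2a, h2b⟩ | ⟨h3a, h3b⟩
        · exact Or.inr (Or.inl ⟨Reachable.refl _, h1.symm⟩)
        · exact Or.inl (reach_of_reach_delete h2a.symm hfull)
        · exact Or.inl h3b.symm
      · -- x = v, y = u
        rcases ih with h1 | ⟨h2a, h2b⟩ | ⟨h3a, h3b⟩
        · exact Or.inr (Or.inr ⟨Reachable.refl _, h1.symm⟩)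
        · exact Or.inl h2b.symm
        · exact Or.inl (reach_of_reach_delete h3a hfull)
    · have hadj : (H.deleteEdges {s(u, v)}).Adj x y := by
        rw [deleteEdges_adj]
        exact ⟨hxy, by simpa using he⟩
      rcases ih with h1 | ⟨h2a, h2b⟩ | ⟨h3a, h3b⟩
      · exact Or.inl (hadj.reachable.trans h1)
      · exact Or.inr (Or.inl ⟨hadj.reachable.trans h2a, h2b⟩)
      · exact Or.inr (Or.inr ⟨hadj.reachable.trans h3a, h3b⟩)

lemma ncomp_delete_one_le_pair (H : SimpleGraph V) (u v : V) :
    ncomp (H.deleteEdges {s(u, v)}) ≤ ncomp H + 1 := by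
  set H' := H.deleteEdges {s(u, v)} with hH'
  apply card_le_add_one (ψ := cmap (deleteEdges_le _ : H' ≤ H))
    (p := H'.connectedComponentMk u) (q := H'.connectedComponentMk v)
  intro x y
  refine ConnectedComponent.ind₂ (fun a b hab => ?_) x y
  rw [cmap_mk, cmap_mk] at hab
  have hr : H.Reachable a b := ConnectedComponent.exact hab
  rcases reach_cases (u := u) (v := v) hr with h1 | ⟨h2a, h2b⟩ | ⟨h3a, h3b⟩
  · exact Or.inl (ConnectedComponent.sound h1)
  · exact Or.inr (Or.inl ⟨ConnectedComponent.sound h2a, ConnectedComponent.sound h2b⟩)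
  · exact Or.inr (Or.inr ⟨ConnectedComponent.sound h3a, ConnectedComponent.sound h3b⟩)

lemma ncomp_delete_one_le (H : SimpleGraph V) (e : Sym2 V) :
    ncomp (H.deleteEdges {e}) ≤ ncomp H + 1 := by
  induction e using Sym2.ind with
  | _ u v => exact ncomp_delete_one_le_pair H u v

lemma ncomp_delete_eq_of_reachable {H : SimpleGraph V} {u v : V}
    (hr : (H.deleteEdges {s(u, v)}).Reachable u v) :
    ncomp (H.deleteEdges {s(u, v)}) = ncomp H := by
  apply Nat.card_eq_of_bijective (cmap (deleteEdges_le _))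
  constructor
  · intro x y
    refine ConnectedComponent.ind₂ (fun a b hab => ?_) x y
    rw [cmap_mk, cmap_mk] at hab
    exact ConnectedComponent.sound (reach_of_reach_delete hr (ConnectedComponent.exact hab))
  · exact cmap_surjective _

lemma ncomp_lt_delete {H : SimpleGraph V} {u v : V} (hadj : H.Adj u v)
    (hsep : ¬(H.deleteEdges {s(u, v)}).Reachable u v) :
    ncomp H + 1 ≤ ncomp (H.deleteEdges {s(u, v)}) := by
  apply surj_add_one (cmap_surjective (deleteEdges_le _ : H.deleteEdges {s(u, v)} ≤ H))
    (a := (H.deleteEdges {s(u, v)}).connectedComponentMk u)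
    (b := (H.deleteEdges {s(u, v)}).connectedComponentMk v)
  · intro h
    exact hsep (ConnectedComponent.exact h)
  · rw [cmap_mk, cmap_mk]
    exact ConnectedComponent.sound hadj.reachable

lemma ncomp_delete_finset_le (H : SimpleGraph V) (F : Finset (Sym2 V)) :
    ncomp (H.deleteEdges ↑F) ≤ ncomp H + F.card := by
  classical
  induction F using Finset.induction_on with
  | empty => simp
  | @insert e F' he ih =>
    have : H.deleteEdges ↑(insert e F') = (H.deleteEdges ↑F').deleteEdges {e} := by
      rw [deleteEdges_deleteEdges]
      congr 1
      rw [Finset.coe_insert]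
      rw [Set.insert_eq]
      rw [Set.union_comm]
    rw [this, Finset.card_insert_of_notMem he]
    have := ncomp_delete_one_le (H.deleteEdges ↑F') e
    omega

end Graph

open Function Set SimpleGraph

section Super

variable {V : Type*} [Fintype V]

lemma sym2_cases (e : Sym2 V) : ∃ u v : V, e = s(u, v) := by
  induction e using Sym2.ind with
  | _ u v => exact ⟨u, v, rfl⟩

lemma supermod_one (H : SimpleGraph V) {K L : Set (Sym2 V)} (hKL : K ⊆ L) {e : Sym2 V}
    (heL : e ∉ L) :
    ncomp (H.deleteEdges (K ∪ {e})) + ncomp (H.deleteEdges L) ≤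
    ncomp (H.deleteEdges (L ∪ {e})) + ncomp (H.deleteEdges K) := by
  obtain ⟨u, v, rfl⟩ := sym2_cases e
  have hdelK : H.deleteEdges (K ∪ {s(u, v)}) = (H.deleteEdges K).deleteEdges {s(u, v)} :=
    (deleteEdges_deleteEdges _ _).symm
  have hdelL : H.deleteEdges (L ∪ {s(u, v)}) = (H.deleteEdges L).deleteEdges {s(u, v)} :=
    (deleteEdges_deleteEdges _ _).symm
  by_cases hadj : (H.deleteEdges K).Adj u v
  · by_cases hreach : ((H.deleteEdges K).deleteEdges {s(u, v)}).Reachable u v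
    · have h1 : ncomp (H.deleteEdges (K ∪ {s(u, v)})) = ncomp (H.deleteEdges K) := by
        rw [hdelK]; exact ncomp_delete_eq_of_reachable hreach
      have h2 : ncomp (H.deleteEdges L) ≤ ncomp (H.deleteEdges (L ∪ {s(u, v)})) :=
        ncomp_le_of_le (deleteEdges_anti Set.subset_union_left)
      omega
    · have hsepL : ¬((H.deleteEdges L).deleteEdges {s(u, v)}).Reachable u v := by
        intro hcon
        refine hreach (hcon.mono ?_)
        rw [← hdelK, ← hdelL]
        exact deleteEdges_anti (Set.union_subset_union_left _ hKL)
      have hadjL : (H.deleteEdges L).Adj u v := by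
        rw [deleteEdges_adj]
        exact ⟨(deleteEdges_adj.mp hadj).1, heL⟩
      have h1 : ncomp (H.deleteEdges L) + 1 ≤ ncomp (H.deleteEdges (L ∪ {s(u, v)})) := by
        rw [hdelL]; exact ncomp_lt_delete hadjL hsepL
      have h2 : ncomp (H.deleteEdges (K ∪ {s(u, v)})) ≤ ncomp (H.deleteEdges K) + 1 := by
        rw [hdelK]; exact ncomp_delete_one_le _ _
      omega
  · -- s(u,v) is not an edge of H − K, nor of H − L
    have hK : H.deleteEdges (K ∪ {s(u, v)}) = H.deleteEdges K := by
      rw [hdelK, deleteEdges_eq_self]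
      rw [Set.disjoint_singleton_right]
      intro hmem
      exact hadj ((mem_edgeSet _).mp hmem)
    have hL : H.deleteEdges (L ∪ {s(u, v)}) = H.deleteEdges L := by
      rw [hdelL, deleteEdges_eq_self]
      rw [Set.disjoint_singleton_right]
      intro hmem
      rw [mem_edgeSet, deleteEdges_adj] at hmem
      exact hadj (by rw [deleteEdges_adj]; exact ⟨hmem.1, fun hc => heL (hKL hc)⟩)
    rw [hK, hL]
    omega

lemma supermod_finset (H : SimpleGraph V) (F : Finset (Sym2 V)) :
    ∀ (K L : Set (Sym2 V)), K ⊆ L → (∀ e ∈ F, e ∉ L) →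
    ncomp (H.deleteEdges (K ∪ ↑F)) + ncomp (H.deleteEdges L) ≤
    ncomp (H.deleteEdges (L ∪ ↑F)) + ncomp (H.deleteEdges K) := by
  classical
  induction F using Finset.induction_on with
  | empty => intro K L hKL _; simp [Nat.add_comm]
  | @insert e F' he ih =>
    intro K L hKL hF
    have hcoe : ∀ M : Set (Sym2 V), M ∪ ↑(insert e F') = (M ∪ {e}) ∪ ↑F' := by
      intro M
      rw [Finset.coe_insert, Set.insert_eq, ← Set.union_assoc]
    rw [hcoe K, hcoe L]
    have h1 := ih (K ∪ {e}) (L ∪ {e}) (Set.union_subset_union_left _ hKL) (by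
      intro f hf
      rw [Set.mem_union, Set.mem_singleton_iff]
      push_neg
      exact ⟨hF f (Finset.mem_insert_of_mem hf), fun hfe => he (hfe ▸ hf)⟩)
    have h2 := supermod_one H hKL (hF e (Finset.mem_insert_self e F'))
    omega

end Super

open Function Set SimpleGraph

section Main

variable {V : Type*} [Fintype V] {C : Type*} [DecidableEq C]

lemma supermod_colors (col : Sym2 V → C) (G : SimpleGraph V) (S₁ S₂ : Finset C) :
    ncomp (G.deleteEdges {f | col f ∈ S₁}) + ncomp (G.deleteEdges {f | col f ∈ S₂}) ≤
    ncomp (G.deleteEdges {f | col f ∈ S₁ ∪ S₂}) +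
      ncomp (G.deleteEdges {f | col f ∈ S₁ ∩ S₂}) := by
  classical
  have hfin : ({f : Sym2 V | col f ∈ S₂ \ S₁}).Finite := Set.toFinite _
  have h := supermod_finset G hfin.toFinset {f | col f ∈ S₁ ∩ S₂} {f | col f ∈ S₁}
    (by intro f hf
        simp only [Set.mem_setOf_eq, Finset.mem_inter] at hf ⊢
        exact hf.1)
    (by intro f hf
        rw [Set.Finite.mem_toFinset] at hf
        simp only [Set.mem_setOf_eq, Finset.mem_sdiff] at hf ⊢
        exact hf.2)
  have hK : {f : Sym2 V | col f ∈ S₁ ∩ S₂} ∪ ↑hfin.toFinset = {f : Sym2 V | col f ∈ S₂} := by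
    rw [Set.Finite.coe_toFinset]
    ext f
    simp only [Set.mem_union, Set.mem_setOf_eq, Finset.mem_inter, Finset.mem_sdiff]
    tauto
  have hL : {f : Sym2 V | col f ∈ S₁} ∪ ↑hfin.toFinset = {f : Sym2 V | col f ∈ S₁ ∪ S₂} := by
    rw [Set.Finite.coe_toFinset]
    ext f
    simp only [Set.mem_union, Set.mem_setOf_eq, Finset.mem_union, Finset.mem_sdiff]
    tauto
  rw [hK, hL] at h
  omega

lemma exists_tree : ∀ (N : ℕ) (H : SimpleGraph V), H.edgeSet.ncard = N → H.Connected →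
    ∃ T, T ≤ H ∧ T.IsTree := by
  intro N
  induction N using Nat.strong_induction_on with
  | _ N ih =>
  intro H hN hconn
  by_cases hac : H.IsAcyclic
  · exact ⟨H, le_refl H, ⟨hconn, hac⟩⟩
  · rw [isAcyclic_iff_forall_adj_isBridge] at hac
    push_neg at hac
    obtain ⟨u, v, hadj, hnb⟩ := hac
    rw [isBridge_iff] at hnb
    push_neg at hnb
    have hreach : (H.deleteEdges {s(u, v)}).Reachable u v := hnb
    have hconn' : (H.deleteEdges {s(u, v)}).Connected := by
      have hnon : Nonempty V := hconn.nonempty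
      constructor
      intro a b
      exact reach_of_reach_delete hreach (hconn.preconnected a b)
    have hcard : (H.deleteEdges {s(u, v)}).edgeSet.ncard < N := by
      rw [edgeSet_deleteEdges]
      have hmem : s(u, v) ∈ H.edgeSet := hadj
      have h1 : (H.edgeSet \ {s(u, v)}).ncard + 1 = H.edgeSet.ncard :=
        Set.ncard_diff_singleton_add_one hmem
      omega
    obtain ⟨T, hT1, hT2⟩ := ih _ hcard _ rfl hconn'
    exact ⟨T, hT1.trans (deleteEdges_le _), hT2⟩

lemma extract (col : Sym2 V → C) (G : SimpleGraph V)
    (hP : ∀ S : Finset C, ncomp (G.deleteEdges {f | col f ∈ S}) ≤ S.card + 1)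
    {e : Sym2 V} {u v : V} (he : e = s(u, v)) (heG : e ∈ G.edgeSet)
    {S : Finset C}
    (hS : S.card + 1 < ncomp ((G.deleteEdges {e}).deleteEdges {f | col f ∈ S})) :
    col e ∉ S ∧ ¬((G.deleteEdges {f | col f ∈ S}).deleteEdges {e}).Reachable u v ∧
      ncomp (G.deleteEdges {f | col f ∈ S}) = S.card + 1 := by
  have hcomm : (G.deleteEdges {e}).deleteEdges {f | col f ∈ S}
      = (G.deleteEdges {f | col f ∈ S}).deleteEdges {e} := by
    rw [deleteEdges_deleteEdges, deleteEdges_deleteEdges, Set.union_comm]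
  have hcS : col e ∉ S := by
    intro hc
    have hsub : ({e} : Set (Sym2 V)) ∪ {f | col f ∈ S} = {f | col f ∈ S} := by
      apply Set.union_eq_self_of_subset_left
      intro f hf
      rw [Set.mem_singleton_iff] at hf
      subst hf
      exact hc
    rw [deleteEdges_deleteEdges, hsub] at hS
    exact absurd (hP S) (by omega)
  refine ⟨hcS, ?_, ?_⟩
  · intro hr
    rw [hcomm] at hS
    subst he
    rw [ncomp_delete_eq_of_reachable hr] at hS
    exact absurd (hP S) (by omega)
  · have h1 := hP S
    have h2 : ncomp ((G.deleteEdges {f | col f ∈ S}).deleteEdges {e}) ≤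
        ncomp (G.deleteEdges {f | col f ∈ S}) + 1 := ncomp_delete_one_le _ _
    rw [hcomm] at hS
    omega

lemma key (col : Sym2 V → C) (G : SimpleGraph V)
    (hP : ∀ S : Finset C, ncomp (G.deleteEdges {f | col f ∈ S}) ≤ S.card + 1)
    {e₁ e₂ : Sym2 V} (he₁ : e₁ ∈ G.edgeSet) (he₂ : e₂ ∈ G.edgeSet) (hne : e₁ ≠ e₂)
    (hcol : col e₁ = col e₂) :
    (∀ S : Finset C, ncomp ((G.deleteEdges {e₁}).deleteEdges {f | col f ∈ S}) ≤ S.card + 1) ∨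
    (∀ S : Finset C, ncomp ((G.deleteEdges {e₂}).deleteEdges {f | col f ∈ S}) ≤ S.card + 1) := by
  by_contra hcon
  push_neg at hcon
  obtain ⟨⟨S₁, hS₁⟩, S₂, hS₂⟩ := hcon
  obtain ⟨u₁, v₁, he₁uv⟩ := sym2_cases e₁
  obtain ⟨u₂, v₂, he₂uv⟩ := sym2_cases e₂
  have f₁ := extract col G hP he₁uv he₁ hS₁
  have f₂ := extract col G hP he₂uv he₂ hS₂
  have hcS : col e₁ ∉ S₁ ∪ S₂ := by
    rw [Finset.mem_union]
    push_neg
    exact ⟨f₁.1, by rw [hcol]; exact f₂.1⟩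
  -- tightness of the union
  have htight : ncomp (G.deleteEdges {f | col f ∈ S₁ ∪ S₂}) = (S₁ ∪ S₂).card + 1 := by
    have hsm := supermod_colors col G S₁ S₂
    have hint := hP (S₁ ∩ S₂)
    have huni := hP (S₁ ∪ S₂)
    have hcards := Finset.card_union_add_card_inter S₁ S₂
    have t₁ := f₁.2.2
    have t₂ := f₂.2.2
    omega
  -- the graph with all (insert c S)-coloured edges removed
  have hHle₁ : G.deleteEdges {f | col f ∈ insert (col e₁) (S₁ ∪ S₂)} ≤
      (G.deleteEdges {f | col f ∈ S₁}).deleteEdges {e₁} := by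
    rw [deleteEdges_deleteEdges]
    apply deleteEdges_anti
    intro f hf
    rw [Set.mem_union] at hf
    rw [Set.mem_setOf_eq, Finset.mem_insert]
    rcases hf with hf | hf
    · exact Or.inr (Finset.mem_union_left _ hf)
    · rw [Set.mem_singleton_iff] at hf
      subst hf
      exact Or.inl rfl
  have hHle₂ : G.deleteEdges {f | col f ∈ insert (col e₁) (S₁ ∪ S₂)} ≤
      (G.deleteEdges {f | col f ∈ S₂}).deleteEdges {e₂} := by
    rw [deleteEdges_deleteEdges]
    apply deleteEdges_anti
    intro f hf
    rw [Set.mem_union] at hf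
    rw [Set.mem_setOf_eq, Finset.mem_insert]
    rcases hf with hf | hf
    · exact Or.inr (Finset.mem_union_right _ hf)
    · rw [Set.mem_singleton_iff] at hf
      subst hf
      exact Or.inl hcol.symm
  have hsep₁ : ¬(G.deleteEdges {f | col f ∈ insert (col e₁) (S₁ ∪ S₂)}).Reachable u₁ v₁ :=
    fun hr => f₁.2.1 (hr.mono hHle₁)
  have hsep₂ : ¬(G.deleteEdges {f | col f ∈ insert (col e₁) (S₁ ∪ S₂)}).Reachable u₂ v₂ :=
    fun hr => f₂.2.1 (hr.mono hHle₂)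
  have hle : G.deleteEdges {f | col f ∈ insert (col e₁) (S₁ ∪ S₂)} ≤
      G.deleteEdges {f | col f ∈ S₁ ∪ S₂} := by
    apply deleteEdges_anti
    intro f hf
    rw [Set.mem_setOf_eq] at hf ⊢
    exact Finset.mem_insert_of_mem hf
  have hmkadj : ∀ (e : Sym2 V) (u v : V), e = s(u, v) → e ∈ G.edgeSet → col e ∉ S₁ ∪ S₂ →
      (G.deleteEdges {f | col f ∈ S₁ ∪ S₂}).connectedComponentMk u =
      (G.deleteEdges {f | col f ∈ S₁ ∪ S₂}).connectedComponentMk v := by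
    intro e u v huv hG hcol'
    apply ConnectedComponent.connectedComponentMk_eq_of_adj
    rw [deleteEdges_adj]
    constructor
    · rw [← mem_edgeSet, ← huv]
      exact hG
    · rw [Set.mem_setOf_eq, ← huv]
      exact hcol'
  have hψ₁ : cmap hle ((G.deleteEdges {f | col f ∈ insert (col e₁) (S₁ ∪ S₂)}).connectedComponentMk u₁)
      = cmap hle ((G.deleteEdges {f | col f ∈ insert (col e₁) (S₁ ∪ S₂)}).connectedComponentMk v₁) := by
    rw [cmap_mk, cmap_mk]
    exact hmkadj e₁ u₁ v₁ he₁uv he₁ hcS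
  have hψ₂ : cmap hle ((G.deleteEdges {f | col f ∈ insert (col e₁) (S₁ ∪ S₂)}).connectedComponentMk u₂)
      = cmap hle ((G.deleteEdges {f | col f ∈ insert (col e₁) (S₁ ∪ S₂)}).connectedComponentMk v₂) := by
    rw [cmap_mk, cmap_mk]
    exact hmkadj e₂ u₂ v₂ he₂uv he₂ (by rw [← hcol]; exact hcS)
  have hmkne₁ : (G.deleteEdges {f | col f ∈ insert (col e₁) (S₁ ∪ S₂)}).connectedComponentMk u₁ ≠
      (G.deleteEdges {f | col f ∈ insert (col e₁) (S₁ ∪ S₂)}).connectedComponentMk v₁ :=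
    fun h => hsep₁ (ConnectedComponent.exact h)
  have hmkne₂ : (G.deleteEdges {f | col f ∈ insert (col e₁) (S₁ ∪ S₂)}).connectedComponentMk u₂ ≠
      (G.deleteEdges {f | col f ∈ insert (col e₁) (S₁ ∪ S₂)}).connectedComponentMk v₂ :=
    fun h => hsep₂ (ConnectedComponent.exact h)
  have hcompH : ncomp (G.deleteEdges {f | col f ∈ insert (col e₁) (S₁ ∪ S₂)}) ≤
      (S₁ ∪ S₂).card + 2 := by
    have := hP (insert (col e₁) (S₁ ∪ S₂))
    rw [Finset.card_insert_of_notMem hcS] at this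
    omega
  set H := G.deleteEdges {f | col f ∈ insert (col e₁) (S₁ ∪ S₂)} with hHdef
  by_cases hpair : (H.connectedComponentMk u₂ = H.connectedComponentMk u₁ ∧
      H.connectedComponentMk v₂ = H.connectedComponentMk v₁) ∨
      (H.connectedComponentMk u₂ = H.connectedComponentMk v₁ ∧
      H.connectedComponentMk v₂ = H.connectedComponentMk u₁)
  · -- parallel case : contradiction with e₁ being a bridge mod S₁
    have hadj2 : ((G.deleteEdges {f | col f ∈ S₁}).deleteEdges {e₁}).Adj u₂ v₂ := by
      rw [deleteEdges_adj, deleteEdges_adj]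
      refine ⟨⟨?_, ?_⟩, ?_⟩
      · rw [← mem_edgeSet, ← he₂uv]
        exact he₂
      · rw [Set.mem_setOf_eq, ← he₂uv, ← hcol]
        intro hc
        exact hcS (Finset.mem_union_left _ hc)
      · rw [Set.mem_singleton_iff, ← he₂uv]
        exact fun h => hne h.symm
    rcases hpair with ⟨hA, hB⟩ | ⟨hA, hB⟩
    · have r1 : H.Reachable u₁ u₂ := (ConnectedComponent.exact hA).symm
      have r2 : H.Reachable v₂ v₁ := ConnectedComponent.exact hB
      exact f₁.2.1 (((r1.mono hHle₁).trans hadj2.reachable).trans (r2.mono hHle₁))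
    · have r1 : H.Reachable u₁ v₂ := (ConnectedComponent.exact hB).symm
      have r2 : H.Reachable u₂ v₁ := ConnectedComponent.exact hA
      exact f₁.2.1 (((r1.mono hHle₁).trans hadj2.symm.reachable).trans (r2.mono hHle₁))
  · -- two distinct collisions: count components
    have hcard := surj_add_two (cmap_surjective hle) hmkne₁ hmkne₂ hpair hψ₁ hψ₂
    have : ncomp (G.deleteEdges {f | col f ∈ S₁ ∪ S₂}) + 2 ≤ ncomp H := hcard
    omega

lemma main (col : Sym2 V → C) [Nonempty V] : ∀ (N : ℕ) (G : SimpleGraph V),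
    G.edgeSet.ncard = N →
    (∀ S : Finset C, ncomp (G.deleteEdges {f | col f ∈ S}) ≤ S.card + 1) →
    ∃ T, T ≤ G ∧ T.IsTree ∧ Set.InjOn col T.edgeSet := by
  intro N
  induction N using Nat.strong_induction_on with
  | _ N ih =>
  intro G hN hP
  by_cases hinj : Set.InjOn col G.edgeSet
  · have hconn : G.Connected := by
      apply connected_of_ncomp_le_one
      have h0 := hP ∅
      have hempty : {f : Sym2 V | col f ∈ (∅ : Finset C)} = ∅ := by simp
      rw [hempty, deleteEdges_empty] at h0
      simpa using h0
    obtain ⟨T, hT1, hT2⟩ := exists_tree _ G rfl hconn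
    exact ⟨T, hT1, hT2, hinj.mono (edgeSet_subset_edgeSet.mpr hT1)⟩
  · rw [Set.InjOn] at hinj
    push_neg at hinj
    obtain ⟨e₁, he₁, e₂, he₂, hcol, hne⟩ := hinj
    have hdec : ∀ e ∈ G.edgeSet, (G.deleteEdges {e}).edgeSet.ncard < N := by
      intro e he
      rw [edgeSet_deleteEdges]
      have h1 : (G.edgeSet \ {e}).ncard + 1 = G.edgeSet.ncard :=
        Set.ncard_diff_singleton_add_one he
      omega
    rcases key col G hP he₁ he₂ hne hcol with hgood | hgood
    · obtain ⟨T, hT1, hT2, hT3⟩ := ih _ (hdec e₁ he₁) _ rfl hgood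
      exact ⟨T, hT1.trans (deleteEdges_le _), hT2, hT3⟩
    · obtain ⟨T, hT1, hT2, hT3⟩ := ih _ (hdec e₂ he₂) _ rfl hgood
      exact ⟨T, hT1.trans (deleteEdges_le _), hT2, hT3⟩

lemma forward (col : Sym2 V → C) (G T : SimpleGraph V) (hTG : T ≤ G) (hT : T.IsTree)
    (hinj : Set.InjOn col T.edgeSet) (S : Finset C) :
    ncomp (G.deleteEdges {f | col f ∈ S}) ≤ S.card + 1 := by
  classical
  have h1 : ncomp (G.deleteEdges {f | col f ∈ S}) ≤ ncomp (T.deleteEdges {f | col f ∈ S}) :=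
    ncomp_le_of_le (deleteEdges_mono hTG)
  have hfin : ({f : Sym2 V | col f ∈ S} ∩ T.edgeSet).Finite := Set.toFinite _
  have hTS : T.deleteEdges {f | col f ∈ S} = T.deleteEdges ↑hfin.toFinset := by
    rw [Set.Finite.coe_toFinset]
    exact deleteEdges_eq_inter_edgeSet _
  have h2 : ncomp (T.deleteEdges ↑hfin.toFinset) ≤ ncomp T + hfin.toFinset.card :=
    ncomp_delete_finset_le _ _
  have h3 : ncomp T = 1 := ncomp_eq_one_of_connected hT.1
  have h4 : hfin.toFinset.card ≤ S.card := by
    apply Finset.card_le_card_of_injOn col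
    · intro f hf
      rw [Finset.mem_coe, Set.Finite.mem_toFinset] at hf
      exact hf.1
    · intro x hx y hy hxy
      rw [Finset.mem_coe, Set.Finite.mem_toFinset] at hx hy
      exact hinj hx.2 hy.2 hxy
  rw [hTS] at h1
  omega

end Main

/-- **Theorem (characterisation of rainbow spanning trees).**
Let `G` be a finite edge-coloured graph of order `n` (colouring `col`, not
necessarily proper).  Then `G` contains a rainbow spanning tree (a spanning
tree no two of whose edges have the same colour) if and only if for every set
`S` of at most `n - 2` colours, deleting from `G` all edges whose colour lies
in `S` leaves a graph with at most `|S| + 1` connected components. -/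
theorem rainbow_spanning_tree_iff
    {V : Type*} [Fintype V] [Nonempty V] {C : Type*} [DecidableEq C]
    (G : SimpleGraph V) (col : Sym2 V → C) :
    (∃ T : SimpleGraph V, T ≤ G ∧ T.IsTree ∧ Set.InjOn col T.edgeSet) ↔
      ∀ S : Finset C, S.card ≤ Fintype.card V - 2 →
        Nat.card (G.deleteEdges {e | col e ∈ S}).ConnectedComponent ≤
          S.card + 1 := by
  constructor
  · rintro ⟨T, hTG, hT, hinj⟩ S hS
    exact forward col G T hTG hT hinj S
  · intro h
    have hP : ∀ S : Finset C, ncomp (G.deleteEdges {f | col f ∈ S}) ≤ S.card + 1 := by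
      intro S
      by_cases hc : S.card ≤ Fintype.card V - 2
      · exact h S hc
      · have h1 := ncomp_le_card (G.deleteEdges {f | col f ∈ S})
        have h2 : 1 ≤ Fintype.card V := Fintype.card_pos
        omega
    exact main col _ G rfl hP
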